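/- In the symmetric block-withholding game with m_1 = m_2 = m ∈ (0, 1/2], the common revenue along the diagonal, g(x) = (m² + m x − 2x²)/((1 − 2x)(m² + 2 m x)) for x ∈ [0, m) with 2x < 1, satisfies g(0) = 1 and g(x) < 1 for all x ∈ (0, m) with 2x < 1 and m < 1/2. That is, mutual infiltration at equal rates strictly reduces both pools' revenue below the no-attack level (the miner's dilemma). -/

import Mathlib

/-- Common diagonal revenue in the symmetric block-withholding game. -/
noncomputable def g (m x : ℝ) : ℝ :=
  (m ^ 2 + m * x - 2 * x ^ 2) / ((1 - 2 * x) * (m ^ 2 + 2 * m * x))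

theorem stmt_9 (m : ℝ) (hm : 0 < m) (hm' : m ≤ 1 / 2) :
    g m 0 = 1 ∧
    ∀ x : ℝ, 0 < x → x < m → 2 * x < 1 → m < 1 / 2 → g m x < 1 := by
  constructor
  · simp [g]
    simp [hm.ne']
  · intro x hx hxm h2x hm2
    have hden : 0 < (1 - 2 * x) * (m ^ 2 + 2 * m * x) := mul_pos (by linarith) (by positivity)
    rw [g, div_lt_one hden]
    nlinarith [mul_pos hx (mul_pos (by linarith : (0:ℝ) < 1 - 2*m) (by linarith : (0:ℝ) < m + 2*x))]
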